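/- Let p be an odd prime, F a finite field of characteristic p with q = |F| elements, Tr : F → ZMod p the field trace, and ζ = exp(2πi/p) ∈ ℂ. On V = F × F define, for v = (v₁,v₂), the Weyl operator W v as the q×q complex matrix indexed by F with entries (W v)_{x,y} = ζ^{Tr(v₂·(x − 2⁻¹·v₁))} if y = x − v₁ and 0 otherwise, where 2⁻¹ is the inverse of 2 in F and the exponent is taken via the canonical lift of ZMod p to ℕ. Let T be a positive semidefinite q×q complex matrix with Tr T = 1, and define G_T(v) = (1/q) • (W v · T · (W v)ᴴ) for v ∈ V. Then the following are equivalent: (i) G_T is a SIC POVM, i.e. Tr(G_T(v) · G_T(w)) = 1/(q²(q+1)) for all v ≠ w in V and Tr((G_T(v))²) = 1/q² for all v; (ii) for every v ∈ V, |Tr(T · W v)|² = (1 + q·δ_{v,0})/(q+1), where δ_{v,0} = 1 if v = (0,0) and 0 otherwise. -/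

import Mathlib

open Matrix
open scoped Classical ComplexOrder

/-- The trace of a finite field `F` of characteristic `p` over its prime field `ZMod p`. -/
noncomputable def zmodTrace (p : ℕ) [Fact p.Prime] (F : Type*) [Field F] [Fintype F]
    [CharP F p] (x : F) : ZMod p :=
  letI : Algebra (ZMod p) F := ZMod.algebra F p
  Algebra.trace (ZMod p) F x

/-- The Weyl operator `W v` on `ℓ²(F)` associated with the phase-space point
`v = (v₁, v₂) ∈ F × F`:  `(W v) f (x) = ζ^Tr(v₂(x − 2⁻¹v₁)) f(x − v₁)` where
`ζ = exp(2πi/p)`. -/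
noncomputable def weyl (p : ℕ) [Fact p.Prime] (F : Type*) [Field F] [Fintype F]
    [DecidableEq F] [CharP F p] (v : F × F) : Matrix F F ℂ :=
  Matrix.of fun x y =>
    if y = x - v.1 then
      Complex.exp (2 * (Real.pi : ℂ) * Complex.I / (p : ℂ)) ^
        (zmodTrace p F (v.2 * (x - (2 : F)⁻¹ * v.1))).val
    else 0

/-- The covariant phase-space observable generated by `T`:
`G_T(v) = (1/q) • W v · T · (W v)ᴴ`. -/
noncomputable def phaseObs (p : ℕ) [Fact p.Prime] (F : Type*) [Field F] [Fintype F]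
    [DecidableEq F] [CharP F p] (T : Matrix F F ℂ) (v : F × F) : Matrix F F ℂ :=
  ((1 : ℂ) / (Fintype.card F : ℂ)) • (weyl p F v * T * (weyl p F v)ᴴ)

section helpers
variable (p : ℕ) [Fact p.Prime] (F : Type*) [Field F] [Fintype F] [DecidableEq F] [CharP F p]

noncomputable def zet : ℂ := Complex.exp (2 * (Real.pi : ℂ) * Complex.I / (p : ℂ))

lemma zet_prim : IsPrimitiveRoot (zet p) p :=
  Complex.isPrimitiveRoot_exp p (Fact.out : p.Prime).ne_zero

noncomputable def psi (x : F) : ℂ := zet p ^ (zmodTrace p F x).val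

lemma zmodTrace_add (x y : F) :
    zmodTrace p F (x + y) = zmodTrace p F x + zmodTrace p F y := by
  unfold zmodTrace; exact map_add _ x y

lemma zmodTrace_zero : zmodTrace p F (0 : F) = 0 := by
  unfold zmodTrace; exact map_zero _

lemma zet_pow_mod (n : ℕ) : zet p ^ (n % p) = zet p ^ n := by
  conv_rhs => rw [← Nat.div_add_mod n p]
  rw [pow_add, pow_mul, (zet_prim p).pow_eq_one, one_pow, one_mul]

lemma psi_add (x y : F) : psi p F (x + y) = psi p F x * psi p F y := by
  haveI : NeZero p := ⟨(Fact.out : p.Prime).ne_zero⟩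
  unfold psi
  rw [zmodTrace_add, ZMod.val_add, zet_pow_mod, pow_add]

lemma psi_zero : psi p F 0 = 1 := by
  unfold psi; rw [zmodTrace_zero, ZMod.val_zero, pow_zero]

lemma psi_neg (x : F) : psi p F (-x) = (psi p F x)⁻¹ := by
  have h : psi p F x * psi p F (-x) = 1 := by
    rw [← psi_add, add_neg_cancel, psi_zero]
  exact eq_inv_of_mul_eq_one_left ((mul_comm _ _).trans h)

lemma psi_ne_zero (x : F) : psi p F x ≠ 0 :=
  pow_ne_zero _ (Complex.exp_ne_zero _)

lemma conj_psi (x : F) : (starRingEnd ℂ) (psi p F x) = psi p F (-x) := by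
  have hz : (starRingEnd ℂ) (zet p) = (zet p)⁻¹ := by
    unfold zet
    rw [← Complex.exp_conj, ← Complex.exp_neg]
    congr 1
    rw [map_div₀, _root_.map_mul, _root_.map_mul, Complex.conj_I, Complex.conj_ofReal]
    have h2 : (starRingEnd ℂ) 2 = 2 := by norm_num [Complex.ext_iff]
    have hp : (starRingEnd ℂ) (p : ℂ) = (p : ℂ) := Complex.conj_natCast p
    rw [h2, hp]
    ring
  rw [show psi p F (-x) = (psi p F x)⁻¹ from psi_neg p F x]
  unfold psi
  rw [map_pow, hz, inv_pow]

lemma psi_sum {c : F} (hc : c ≠ 0) : ∑ x : F, psi p F (c * x) = 0 := by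
  haveI : NeZero p := ⟨(Fact.out : p.Prime).ne_zero⟩
  obtain ⟨y, hy⟩ : ∃ y : F, zmodTrace p F (c * y) ≠ 0 := by
    letI : Algebra (ZMod p) F := ZMod.algebra F p
    haveI : FiniteDimensional (ZMod p) F := Module.Finite.of_finite
    have htr := (traceForm_nondegenerate (ZMod p) F).1 c
    simp_rw [Algebra.traceForm_apply] at htr
    by_contra! hf
    unfold zmodTrace at hf
    exact hc (htr hf)
  have hy1 : psi p F (c * y) ≠ 1 := by
    unfold psi
    intro h
    exact hy (by
      have hlt : (zmodTrace p F (c * y)).val < p := ZMod.val_lt _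
      have h0 : 0 < (zmodTrace p F (c * y)).val :=
        Nat.pos_of_ne_zero fun h0 => hy ((ZMod.val_eq_zero _).mp h0)
      exact absurd h ((zet_prim p).pow_ne_one_of_pos_of_lt h0.ne' hlt))
  have key : (∑ x : F, psi p F (c * x)) * psi p F (c * y) = ∑ x : F, psi p F (c * x) := by
    rw [Finset.sum_mul]
    refine Fintype.sum_equiv (Equiv.addRight y) _ _ fun x => ?_
    simp only [Equiv.coe_addRight]
    rw [mul_add, psi_add]
  by_contra hS
  exact hy1 (mul_left_cancel₀ hS (by rw [mul_one]; exact key))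


lemma weyl_apply (v : F × F) (x y : F) : weyl p F v x y =
    if y = x - v.1 then psi p F (v.2 * (x - (2:F)⁻¹ * v.1)) else 0 := rfl

lemma two_F_ne_zero (hp2 : p ≠ 2) : (2 : F) ≠ 0 := by
  intro h
  have h' : ((2 : ℕ) : F) = 0 := by exact_mod_cast h
  have := (CharP.cast_eq_zero_iff F p 2).mp h'
  rcases (Nat.prime_two.eq_one_or_self_of_dvd p this) with h1 | h1
  · exact (Fact.out : p.Prime).ne_one h1
  · exact hp2 h1

lemma weyl_mul (h2 : (2:F) ≠ 0) (v w : F × F) :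
    weyl p F v * weyl p F w =
      psi p F ((v.2 * w.1 - v.1 * w.2) * (2:F)⁻¹) • weyl p F (v + w) := by
  ext x z
  rw [Matrix.mul_apply, Matrix.smul_apply]
  simp only [weyl_apply, ite_mul, zero_mul, smul_eq_mul]
  rw [Finset.sum_ite_eq' Finset.univ (x - v.1)
    (fun y => psi p F (v.2 * (x - (2:F)⁻¹ * v.1)) *
      (if z = y - w.1 then psi p F (w.2 * (y - (2:F)⁻¹ * w.1)) else 0))]
  simp only [Finset.mem_univ, if_true]
  have hc : (z = x - v.1 - w.1) ↔ (z = x - (v + w).1) := by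
    rw [Prod.fst_add, sub_sub]
  by_cases hz : z = x - v.1 - w.1
  · rw [if_pos hz, if_pos (hc.mp hz), ← psi_add, ← psi_add]
    congr 1
    rw [Prod.fst_add, Prod.snd_add]
    have h21 : (2:F)⁻¹ * 2 = 1 := inv_mul_cancel₀ h2
    linear_combination (v.1 * w.2) * h21
  · rw [if_neg hz, if_neg (fun hh => hz (hc.mpr hh)), mul_zero, mul_zero]

lemma conjTranspose_weyl (h2 : (2:F) ≠ 0) (v : F × F) :
    (weyl p F v)ᴴ = weyl p F (-v) := by
  ext x y
  rw [Matrix.conjTranspose_apply, weyl_apply, weyl_apply]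
  have hc : (x = y - v.1) ↔ (y = x - (-v).1) := by
    rw [Prod.fst_neg, sub_neg_eq_add]
    constructor <;> intro h <;> [skip; skip] <;> subst h <;> ring_nf <;> try rfl
  by_cases h : x = y - v.1
  · rw [if_pos h, if_pos (hc.mp h), RCLike.star_def, conj_psi]
    congr 1
    subst h
    rw [Prod.fst_neg, Prod.snd_neg]
    have h21 : (2:F)⁻¹ * 2 = 1 := inv_mul_cancel₀ h2
    linear_combination (v.1 * v.2) * h21
  · rw [if_neg h, if_neg (fun hh => h (hc.mpr hh)), star_zero]

lemma weyl_zero : weyl p F 0 = 1 := by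
  ext x y
  rw [weyl_apply]
  simp [Matrix.one_apply, eq_comm, psi_zero]

lemma trace_weyl (v : F × F) :
    (weyl p F v).trace = if v = 0 then (Fintype.card F : ℂ) else 0 := by
  rw [Matrix.trace]
  simp only [Matrix.diag, weyl_apply]
  by_cases h1 : v.1 = 0
  · simp only [h1, sub_zero, mul_zero, if_true]
    by_cases h2 : v.2 = 0
    · have hv : v = 0 := Prod.ext h1 h2
      simp [hv, psi_zero, Finset.card_univ]
    · have hv : v ≠ 0 := fun h => h2 (by rw [h]; rfl)
      rw [if_neg hv]
      simpa using psi_sum p F h2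
  · have hv : v ≠ 0 := fun h => h1 (by rw [h]; rfl)
    rw [if_neg hv]
    have : ∀ x : F, ¬ (x = x - v.1) := fun x h => h1 (by
      have := sub_eq_self.mp h.symm; exact this)
    simp [this]

lemma psi_sum_if (c : F) :
    ∑ x : F, psi p F (c * x) = if c = 0 then (Fintype.card F : ℂ) else 0 := by
  by_cases h : c = 0
  · simp [h, psi_zero, Finset.card_univ]
  · rw [if_neg h]; exact psi_sum p F h

lemma psi_sum_pair (b c : F) :
    ∑ a : F × F, psi p F (b * a.1 + c * a.2) =
      if b = 0 ∧ c = 0 then ((Fintype.card F : ℂ)) ^ 2 else 0 := by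
  rw [Fintype.sum_prod_type]
  simp_rw [psi_add]
  rw [← Finset.sum_mul_sum]
  rw [psi_sum_if, psi_sum_if]
  by_cases hb : b = 0 <;> by_cases hc : c = 0 <;> simp [hb, hc, sq]

lemma trace_mul_weyl (T : Matrix F F ℂ) (a : F × F) :
    (T * weyl p F a).trace
      = ∑ y : F, T (y - a.1) y * psi p F (a.2 * (y - (2:F)⁻¹ * a.1)) := by
  rw [Matrix.trace]
  simp only [Matrix.diag_apply, Matrix.mul_apply, weyl_apply]
  rw [Finset.sum_comm]
  refine Finset.sum_congr rfl fun y _ => ?_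
  simp only [mul_ite, mul_zero]
  rw [Finset.sum_ite_eq' Finset.univ (y - a.1)
    (fun x => T x y * psi p F (a.2 * (y - (2:F)⁻¹ * a.1)))]
  simp

end helpers
section h2
variable (p : ℕ) [Fact p.Prime] (F : Type*) [Field F] [Fintype F] [DecidableEq F] [CharP F p]

lemma trace_WTWT (h2 : (2:F) ≠ 0) (T : Matrix F F ℂ) (u : F × F) :
    (weyl p F (-u) * T * weyl p F u * T).trace
      = ∑ x : F, ∑ r : F,
          T (x + u.1) r * T (r - u.1) x * psi p F (u.2 * (r - x - u.1)) := by
  simp only [Matrix.trace, Matrix.diag_apply, Matrix.mul_apply, weyl_apply,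
    Finset.sum_mul, Finset.mul_sum, ite_mul, zero_mul, mul_ite, mul_zero,
    Finset.sum_ite_eq', Finset.mem_univ, if_true]
  refine Finset.sum_congr rfl fun x _ => ?_
  rw [Finset.sum_comm]
  refine Finset.sum_congr rfl fun r _ => ?_
  rw [Finset.sum_ite_eq' Finset.univ (r - u.1)
    (fun x1 => psi p F ((-u).2 * (x - 2⁻¹ * (-u).1)) * T (x - (-u).1) r *
      psi p F (u.2 * (r - 2⁻¹ * u.1)) * T x1 x)]
  simp only [Finset.mem_univ, if_true]
  have h21 : (2:F)⁻¹ * 2 = 1 := inv_mul_cancel₀ h2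
  have hps : psi p F ((-u).2 * (x - 2⁻¹ * (-u).1)) * psi p F (u.2 * (r - 2⁻¹ * u.1))
      = psi p F (u.2 * (r - x - u.1)) := by
    rw [← psi_add]
    congr 1
    rw [Prod.fst_neg, Prod.snd_neg]
    linear_combination (-(u.2 * u.1)) * h21
  rw [show x - (-u).1 = x + u.1 by rw [Prod.fst_neg, sub_neg_eq_add], ← hps]
  ring

lemma master (h2 : (2:F) ≠ 0) (T : Matrix F F ℂ) (u : F × F) :
    ∑ a : F × F, (T * weyl p F a).trace * (T * weyl p F (-a)).trace *
        psi p F (u.2 * a.1 - u.1 * a.2)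
      = (Fintype.card F : ℂ) * (weyl p F (-u) * T * weyl p F u * T).trace := by
  have h21 : (2:F)⁻¹ * 2 = 1 := inv_mul_cancel₀ h2
  rw [trace_WTWT p F h2 T u]
  simp_rw [trace_mul_weyl]
  simp_rw [Finset.sum_mul_sum, Finset.sum_mul]
  rw [Fintype.sum_prod_type]
  simp only [Prod.fst_neg, Prod.snd_neg]
  refine Eq.trans (Finset.sum_congr rfl fun a1 _ => Finset.sum_comm) ?_
  refine Eq.trans (Finset.sum_congr rfl fun a1 _ => Finset.sum_congr rfl fun y _ =>
    Finset.sum_comm) ?_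
  -- now ∑ a1 ∑ y ∑ w ∑ a2
  have step1 : ∀ a1 y w : F,
      (∑ a2 : F, T (y - a1) y * psi p F (a2 * (y - 2⁻¹ * a1)) *
        (T (w - -a1) w * psi p F (-a2 * (w - 2⁻¹ * -a1))) *
        psi p F (u.2 * a1 - u.1 * a2))
      = (T (y - a1) y * T (w + a1) w * psi p F (u.2 * a1)) *
          (if y - w - a1 - u.1 = 0 then (Fintype.card F : ℂ) else 0) := by
    intro a1 y w
    rw [← psi_sum_if p F (y - w - a1 - u.1), Finset.mul_sum]
    refine Finset.sum_congr rfl fun a2 _ => ?_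
    have hps : psi p F (a2 * (y - 2⁻¹ * a1)) * psi p F (-a2 * (w - 2⁻¹ * -a1)) *
        psi p F (u.2 * a1 - u.1 * a2)
        = psi p F (u.2 * a1) * psi p F ((y - w - a1 - u.1) * a2) := by
      rw [← psi_add, ← psi_add, ← psi_add]
      congr 1
      linear_combination (-(a2 * a1)) * h21
    rw [show w - -a1 = w + a1 from sub_neg_eq_add w a1]
    calc T (y - a1) y * psi p F (a2 * (y - 2⁻¹ * a1)) *
          (T (w + a1) w * psi p F (-a2 * (w - 2⁻¹ * -a1))) *
          psi p F (u.2 * a1 - u.1 * a2)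
        = T (y - a1) y * T (w + a1) w *
            (psi p F (a2 * (y - 2⁻¹ * a1)) * psi p F (-a2 * (w - 2⁻¹ * -a1)) *
             psi p F (u.2 * a1 - u.1 * a2)) := by ring
      _ = T (y - a1) y * T (w + a1) w *
            (psi p F (u.2 * a1) * psi p F ((y - w - a1 - u.1) * a2)) := by rw [hps]
      _ = _ := by ring
  simp_rw [step1]
  have step2 : ∀ a1 y : F,
      (∑ w : F, T (y - a1) y * T (w + a1) w * psi p F (u.2 * a1) *
        (if y - w - a1 - u.1 = 0 then (Fintype.card F : ℂ) else 0))
      = T (y - a1) y * T (y - a1 - u.1 + a1) (y - a1 - u.1) * psi p F (u.2 * a1) *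
          (Fintype.card F : ℂ) := by
    intro a1 y
    have key : ∀ w : F, T (y - a1) y * T (w + a1) w * psi p F (u.2 * a1) *
        (if y - w - a1 - u.1 = 0 then (Fintype.card F : ℂ) else 0)
        = (if w = y - a1 - u.1 then
            T (y - a1) y * T (w + a1) w * psi p F (u.2 * a1) * (Fintype.card F : ℂ)
          else 0) := by
      intro w
      have hc : (y - w - a1 - u.1 = 0) ↔ (w = y - a1 - u.1) :=
        ⟨fun h => by linear_combination -h, fun h => by linear_combination -h⟩
      rw [mul_ite, mul_zero, if_congr hc rfl rfl]
    simp_rw [key]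
    rw [Finset.sum_ite_eq' Finset.univ (y - a1 - u.1)]
    simp
  simp_rw [step2, Finset.mul_sum]
  rw [Finset.sum_comm]
  conv_rhs => rw [Finset.sum_comm]
  refine Finset.sum_congr rfl fun y _ => ?_
  refine Fintype.sum_equiv
    ⟨fun a1 => y - a1 - u.1, fun x => y - x - u.1,
      fun a => show y - (y - a - u.1) - u.1 = a from by ring,
      fun a => show y - (y - a - u.1) - u.1 = a from by ring⟩ _ _ fun a1 => ?_
  simp only [Equiv.coe_fn_mk]
  rw [show y - a1 - u.1 + a1 = y - u.1 from by ring,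
    show y - a1 - u.1 + u.1 = y - a1 from by ring,
    show u.2 * (y - (y - a1 - u.1) - u.1) = u.2 * a1 from by ring]
  ring
lemma trace_phase (h2 : (2:F) ≠ 0) (T : Matrix F F ℂ) (v w : F × F) :
    (phaseObs p F T v * phaseObs p F T w).trace
      = 1 / (Fintype.card F : ℂ) ^ 2 *
          (weyl p F (-(w - v)) * T * weyl p F (w - v) * T).trace := by
  unfold phaseObs
  rw [conjTranspose_weyl p F h2 v, conjTranspose_weyl p F h2 w]
  rw [Matrix.smul_mul, Matrix.mul_smul, Matrix.trace_smul, Matrix.trace_smul]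
  have assoc1 : weyl p F v * T * weyl p F (-v) * (weyl p F w * T * weyl p F (-w))
      = weyl p F v * (T * (weyl p F (-v) * weyl p F w) * T * weyl p F (-w)) := by
    noncomm_ring
  rw [assoc1, weyl_mul p F h2 (-v) w]
  simp only [Matrix.mul_smul, Matrix.smul_mul, Matrix.trace_smul]
  rw [Matrix.trace_mul_comm]
  rw [mul_assoc (T * weyl p F (-v + w) * T) (weyl p F (-w)) (weyl p F v)]
  rw [weyl_mul p F h2 (-w) v]
  simp only [Matrix.mul_smul, Matrix.trace_smul]
  rw [smul_smul (psi p F (((-v).2 * w.1 - (-v).1 * w.2) * (2:F)⁻¹))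
    (psi p F (((-w).2 * v.1 - (-w).1 * v.2) * (2:F)⁻¹)), ← psi_add]
  rw [show ((-v).2 * w.1 - (-v).1 * w.2) * (2:F)⁻¹ +
        ((-w).2 * v.1 - (-w).1 * v.2) * (2:F)⁻¹ = 0 from by
    simp only [Prod.fst_neg, Prod.snd_neg]; ring]
  rw [psi_zero, one_smul]
  rw [show (-v + w : F × F) = w - v from by abel,
    show (-w + v : F × F) = -(w - v) from by abel]
  rw [Matrix.trace_mul_comm (T * weyl p F (w - v) * T) (weyl p F (-(w - v)))]
  rw [show weyl p F (-(w - v)) * (T * weyl p F (w - v) * T)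
      = weyl p F (-(w - v)) * T * weyl p F (w - v) * T from by noncomm_ring]
  rw [smul_smul, smul_eq_mul]
  congr 1
  rw [div_mul_div_comm, one_mul, sq]
end h2

section final
variable (p : ℕ) [Fact p.Prime] (F : Type*) [Field F] [Fintype F] [DecidableEq F] [CharP F p]

lemma cond_iff (r : F × F) : ((r.2 = 0 ∧ -r.1 = 0) ↔ r = 0) := by
  rw [neg_eq_zero]
  constructor
  · rintro ⟨h2', h1'⟩; exact Prod.ext h1' h2'
  · rintro rfl; exact ⟨rfl, rfl⟩

lemma sum_const_delta (r s : F) :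
    ∑ z : F × F, ((1 + (Fintype.card F : ℂ) * (if z = 0 then 1 else 0)) /
        ((Fintype.card F : ℂ) + 1)) * psi p F (r * z.1 + s * z.2)
      = ((if r = 0 ∧ s = 0 then (Fintype.card F : ℂ) ^ 2 else 0) + (Fintype.card F : ℂ)) /
          ((Fintype.card F : ℂ) + 1) := by
  have pointwise : ∀ z : F × F,
      ((1 + (Fintype.card F : ℂ) * (if z = 0 then 1 else 0)) /
        ((Fintype.card F : ℂ) + 1)) * psi p F (r * z.1 + s * z.2)
      = (1 / ((Fintype.card F : ℂ) + 1)) * psi p F (r * z.1 + s * z.2) +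
        (if z = 0 then ((Fintype.card F : ℂ) / ((Fintype.card F : ℂ) + 1)) *
          psi p F (r * z.1 + s * z.2) else 0) := by
    intro z
    split_ifs <;> ring
  simp_rw [pointwise]
  rw [Finset.sum_add_distrib, ← Finset.mul_sum, psi_sum_pair,
    Finset.sum_ite_eq' Finset.univ (0 : F × F)]
  simp only [Finset.mem_univ, if_true, Prod.fst_zero, Prod.snd_zero, mul_zero, add_zero,
    psi_zero, mul_one]
  split_ifs <;> ring

lemma conj_trace (T : Matrix F F ℂ) (hT : T.IsHermitian) (h2 : (2:F) ≠ 0) (a : F × F) :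
    (T * weyl p F a).trace * (T * weyl p F (-a)).trace
      = ((‖(T * weyl p F a).trace‖ ^ 2 : ℝ) : ℂ) := by
  have h1 : (T * weyl p F (-a)).trace = (starRingEnd ℂ) ((T * weyl p F a).trace) := by
    rw [show (starRingEnd ℂ) ((T * weyl p F a).trace) = star ((T * weyl p F a).trace) from rfl,
      ← Matrix.trace_conjTranspose, Matrix.conjTranspose_mul,
      conjTranspose_weyl p F h2 a, hT.eq, Matrix.trace_mul_comm]
  rw [h1, Complex.mul_conj, Complex.sq_norm]

lemma ite_cond_congr₂ {α : Type*} {P Q : Prop} [Decidable P] [Decidable Q] (h : P ↔ Q)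
    (x y : α) : (if P then x else y) = (if Q then x else y) := by
  by_cases hq : Q
  · rw [if_pos (h.mpr hq), if_pos hq]
  · rw [if_neg (fun hp => hq (h.mp hp)), if_neg hq]

lemma cond_iff3 (a b : F × F) : ((b.2 - a.2 = 0 ∧ a.1 - b.1 = 0) ↔ a = b) := by
  rw [sub_eq_zero, sub_eq_zero]
  constructor
  · rintro ⟨h1', h2'⟩; exact Prod.ext h2' h1'.symm
  · rintro rfl; exact ⟨rfl, rfl⟩

lemma traceW_of_X (h2 : (2:F) ≠ 0) (T : Matrix F F ℂ)
    (hX : ∀ a : F × F, (T * weyl p F a).trace * (T * weyl p F (-a)).trace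
      = (1 + (Fintype.card F : ℂ) * (if a = 0 then 1 else 0)) / ((Fintype.card F : ℂ) + 1))
    (u : F × F) :
    (weyl p F (-u) * T * weyl p F u * T).trace
      = (1 + (Fintype.card F : ℂ) * (if u = 0 then 1 else 0)) / ((Fintype.card F : ℂ) + 1) := by
  have hq0 : (Fintype.card F : ℂ) ≠ 0 := Nat.cast_ne_zero.mpr Fintype.card_ne_zero
  have hq1 : (Fintype.card F : ℂ) + 1 ≠ 0 := by
    have h : ((Fintype.card F + 1 : ℕ) : ℂ) ≠ 0 := Nat.cast_ne_zero.mpr (Nat.succ_ne_zero _)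
    push_cast at h; exact h
  have hm := master p F h2 T u
  rw [show (∑ a : F × F, (T * weyl p F a).trace * (T * weyl p F (-a)).trace *
        psi p F (u.2 * a.1 - u.1 * a.2))
      = ∑ a : F × F, ((1 + (Fintype.card F : ℂ) * (if a = 0 then 1 else 0)) /
          ((Fintype.card F : ℂ) + 1)) * psi p F (u.2 * a.1 + (-u.1) * a.2) from
    Finset.sum_congr rfl fun a _ => by
      rw [hX a, show u.2 * a.1 - u.1 * a.2 = u.2 * a.1 + (-u.1) * a.2 from by ring]] at hm
  rw [sum_const_delta p F u.2 (-u.1), ite_cond_congr₂ (cond_iff F u) ((Fintype.card F : ℂ) ^ 2) 0] at hm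
  apply mul_left_cancel₀ hq0
  rw [← hm]
  split_ifs <;> field_simp <;> ring

lemma X_of_traceW (h2 : (2:F) ≠ 0) (T : Matrix F F ℂ)
    (hW : ∀ u : F × F, (weyl p F (-u) * T * weyl p F u * T).trace
      = (1 + (Fintype.card F : ℂ) * (if u = 0 then 1 else 0)) / ((Fintype.card F : ℂ) + 1))
    (b : F × F) :
    (T * weyl p F b).trace * (T * weyl p F (-b)).trace
      = (1 + (Fintype.card F : ℂ) * (if b = 0 then 1 else 0)) / ((Fintype.card F : ℂ) + 1) := by
  have hq0 : (Fintype.card F : ℂ) ≠ 0 := Nat.cast_ne_zero.mpr Fintype.card_ne_zero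
  have hq1 : (Fintype.card F : ℂ) + 1 ≠ 0 := by
    have h : ((Fintype.card F + 1 : ℕ) : ℂ) ≠ 0 := Nat.cast_ne_zero.mpr (Nat.succ_ne_zero _)
    push_cast at h; exact h
  have hq2 : (Fintype.card F : ℂ) ^ 2 ≠ 0 := pow_ne_zero _ hq0
  set q := (Fintype.card F : ℂ) with hqdef
  set S : F × F → ℂ := fun a => (T * weyl p F a).trace with hSdef
  apply mul_left_cancel₀ hq2
  have e1 : (∑ a : F × F, (S a * S (-a)) *
        (if b.2 - a.2 = 0 ∧ a.1 - b.1 = 0 then q ^ 2 else 0)) = q ^ 2 * (S b * S (-b)) := by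
    rw [show (∑ a : F × F, (S a * S (-a)) *
          (if b.2 - a.2 = 0 ∧ a.1 - b.1 = 0 then q ^ 2 else 0))
        = ∑ a : F × F, (if a = b then (S a * S (-a)) * q ^ 2 else 0) from
      Finset.sum_congr rfl fun a _ => by
        rw [ite_cond_congr₂ (cond_iff3 F a b) (q ^ 2) 0, mul_ite, mul_zero]]
    rw [Finset.sum_ite_eq' Finset.univ b]
    simp only [Finset.mem_univ, if_true]
    ring
  rw [← e1]
  have e2 : ∀ a : F × F, (S a * S (-a)) *
        (if b.2 - a.2 = 0 ∧ a.1 - b.1 = 0 then q ^ 2 else 0)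
      = ∑ u : F × F, S a * S (-a) * psi p F (u.2 * a.1 - u.1 * a.2) *
          psi p F (b.2 * u.1 - b.1 * u.2) := by
    intro a
    rw [← psi_sum_pair p F (b.2 - a.2) (a.1 - b.1), Finset.mul_sum]
    refine Finset.sum_congr rfl fun u _ => ?_
    rw [show psi p F ((b.2 - a.2) * u.1 + (a.1 - b.1) * u.2)
        = psi p F (u.2 * a.1 - u.1 * a.2) * psi p F (b.2 * u.1 - b.1 * u.2) from by
      rw [← psi_add]; congr 1; ring]
    ring
  simp_rw [e2]
  rw [Finset.sum_comm]
  have e3 : ∀ u : F × F, (∑ a : F × F, S a * S (-a) * psi p F (u.2 * a.1 - u.1 * a.2) *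
        psi p F (b.2 * u.1 - b.1 * u.2))
      = (q * ((1 + q * (if u = 0 then 1 else 0)) / (q + 1))) *
          psi p F (b.2 * u.1 + (-b.1) * u.2) := by
    intro u
    rw [← Finset.sum_mul, master p F h2 T u, hW u]
    congr 1
    congr 1
    ring
  simp_rw [e3]
  have e4 : ∀ u : F × F, (q * ((1 + q * (if u = 0 then 1 else 0)) / (q + 1))) *
        psi p F (b.2 * u.1 + (-b.1) * u.2)
      = q * (((1 + q * (if u = 0 then 1 else 0)) / (q + 1)) *
          psi p F (b.2 * u.1 + (-b.1) * u.2)) := fun u => by ring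
  simp_rw [e4]
  rw [← Finset.mul_sum, sum_const_delta p F b.2 (-b.1), ite_cond_congr₂ (cond_iff F b) ((Fintype.card F : ℂ) ^ 2) 0]
  split_ifs <;> field_simp <;> ring

end final


theorem stmt19 (p : ℕ) [Fact p.Prime] (hp2 : p ≠ 2) (F : Type*) [Field F] [Fintype F]
    [DecidableEq F] [CharP F p] (T : Matrix F F ℂ) (hT : T.PosSemidef) (hTtr : T.trace = 1) :
    ((∀ v w : F × F, v ≠ w →
        (phaseObs p F T v * phaseObs p F T w).trace =
          1 / ((Fintype.card F : ℂ) ^ 2 * ((Fintype.card F : ℂ) + 1))) ∧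
      (∀ v : F × F,
        (phaseObs p F T v * phaseObs p F T v).trace = 1 / (Fintype.card F : ℂ) ^ 2)) ↔
    (∀ v : F × F,
      (‖(T * weyl p F v).trace‖) ^ 2 =
        (1 + (Fintype.card F : ℝ) * (if v = 0 then 1 else 0)) / ((Fintype.card F : ℝ) + 1)) := by
  have h2 : (2 : F) ≠ 0 := two_F_ne_zero p F hp2
  have hq0 : (Fintype.card F : ℂ) ≠ 0 := Nat.cast_ne_zero.mpr Fintype.card_ne_zero
  have hq1 : (Fintype.card F : ℂ) + 1 ≠ 0 := by
    have h : ((Fintype.card F + 1 : ℕ) : ℂ) ≠ 0 := Nat.cast_ne_zero.mpr (Nat.succ_ne_zero _)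
    push_cast at h; exact h
  have hq2 : (Fintype.card F : ℂ) ^ 2 ≠ 0 := pow_ne_zero _ hq0
  constructor
  · rintro ⟨hpair, hdiag⟩ v
    have hW : ∀ u : F × F, (weyl p F (-u) * T * weyl p F u * T).trace
        = (1 + (Fintype.card F : ℂ) * (if u = 0 then 1 else 0)) /
            ((Fintype.card F : ℂ) + 1) := by
      intro u
      by_cases hu : u = 0
      · subst hu
        have h := hdiag 0
        rw [trace_phase p F h2 T 0 0, sub_self] at h
        have hTr : (weyl p F (-(0 : F × F)) * T * weyl p F (0 : F × F) * T).trace = 1 :=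
          mul_left_cancel₀ (one_div_ne_zero hq2) (h.trans (mul_one _).symm)
        rw [hTr, if_pos rfl, mul_one, add_comm (1 : ℂ) (Fintype.card F : ℂ), div_self hq1]
      · have h := hpair 0 u (fun h => hu h.symm)
        rw [trace_phase p F h2 T 0 u, sub_zero] at h
        have hTr : (weyl p F (-u) * T * weyl p F u * T).trace
            = 1 / ((Fintype.card F : ℂ) + 1) := by
          apply mul_left_cancel₀ (one_div_ne_zero hq2)
          rw [h]
          field_simp
        rw [hTr, if_neg hu, mul_zero, add_zero]
    have hc := (conj_trace p F T hT.1 h2 v).symm.trans (X_of_traceW p F h2 T hW v)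
    have hr : (((1 + (Fintype.card F : ℝ) * (if v = 0 then 1 else 0)) /
          ((Fintype.card F : ℝ) + 1) : ℝ) : ℂ)
        = (1 + (Fintype.card F : ℂ) * (if v = 0 then 1 else 0)) /
            ((Fintype.card F : ℂ) + 1) := by
      split_ifs <;> push_cast <;> ring
    exact Complex.ofReal_inj.mp (hc.trans hr.symm)
  · intro H
    have hX : ∀ a : F × F, (T * weyl p F a).trace * (T * weyl p F (-a)).trace
        = (1 + (Fintype.card F : ℂ) * (if a = 0 then 1 else 0)) /
            ((Fintype.card F : ℂ) + 1) := by
      intro a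
      rw [conj_trace p F T hT.1 h2 a, H a]
      split_ifs <;> push_cast <;> ring
    have hW := traceW_of_X p F h2 T hX
    constructor
    · intro v w hvw
      rw [trace_phase p F h2 T v w, hW (w - v), if_neg (sub_ne_zero.mpr (Ne.symm hvw)),
        mul_zero, add_zero]
      field_simp
    · intro v
      rw [trace_phase p F h2 T v v, sub_self, hW 0, if_pos rfl, mul_one]
      rw [show (1 : ℂ) + (Fintype.card F : ℂ) = (Fintype.card F : ℂ) + 1 from by ring,
        div_self hq1, mul_one]
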